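/- With S, T' and A as in the setup, assume additionally that every row of S contains at least one zero entry and that q ≥ 1. Then r₊(A) ≥ r₊(S) + r₊(T') + 1. -/

import Mathlib

/-- The nonnegative rank of a matrix `M` with nonnegative real entries: the smallest `r`
such that `M` is a sum of `r` nonnegative matrices each of rank at most one. -/
noncomputable def nnegRank {α β : Type*} [Fintype α] [Fintype β] (M : Matrix α β ℝ) : ℕ :=
  sInf { r : ℕ | ∃ R : Fin r → Matrix α β ℝ,
      (∀ ℓ i j, 0 ≤ R ℓ i j) ∧ (∀ ℓ, (R ℓ).rank ≤ 1) ∧ M = ∑ ℓ, R ℓ }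

/-- The `(m+p+1) × (n·(q+1))` matrix `A` of the setup, built from an `m × n` matrix `S` and a
`p × q` matrix `T'`: its column indexed by `(j, s)` is `(S_j ; t'_s ; 0)` for `s ≤ q`
(0-indexed: `s < q`) and `(S_j ; 0 ; 1)` for `s = q+1` (0-indexed: `s = q`). -/
def buildA {m n p q : ℕ} (S : Matrix (Fin m) (Fin n) ℝ) (T' : Matrix (Fin p) (Fin q) ℝ) :
    Matrix (Fin (m + p + 1)) (Fin n × Fin (q + 1)) ℝ :=
  fun i js =>
    if h1 : (i : ℕ) < m then S ⟨i, h1⟩ js.1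
    else if h2 : (i : ℕ) < m + p then
      (if h3 : (js.2 : ℕ) < q then T' ⟨(i : ℕ) - m, by omega⟩ ⟨js.2, h3⟩ else 0)
    else (if (js.2 : ℕ) < q then 0 else 1)

/-! ### Auxiliary lemmas -/

section Aux

lemma rank_le_one_of_minor {α β : Type*} [Fintype α] [Fintype β] (M : Matrix α β ℝ)
    (h : ∀ x x' y y', M x y * M x' y' = M x y' * M x' y) : M.rank ≤ 1 := by
  classical
  by_cases h0 : M = 0
  · simp [h0]
  · have : ∃ x0 y0, M x0 y0 ≠ 0 := by
      by_contra hc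
      push_neg at hc
      exact h0 (by ext x y; simpa using hc x y)
    obtain ⟨x0, y0, hxy⟩ := this
    have hrange : LinearMap.range M.mulVecLin ≤ Submodule.span ℝ {fun x => M x y0} := by
      rintro v ⟨w, rfl⟩
      refine Submodule.mem_span_singleton.mpr ⟨(∑ y, w y * M x0 y) / M x0 y0, ?_⟩
      funext x
      have key : (∑ y, M x y * w y) * M x0 y0 = ((∑ y, w y * M x0 y) * M x y0) := by
        rw [Finset.sum_mul, Finset.sum_mul]
        refine Finset.sum_congr rfl fun y _ => ?_
        linear_combination w y * h x x0 y y0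
      simp only [Pi.smul_apply, smul_eq_mul, Matrix.mulVecLin_apply, Matrix.mulVec,
        dotProduct]
      field_simp
      linarith [key]
    calc M.rank = Module.finrank ℝ (LinearMap.range M.mulVecLin) := rfl
      _ ≤ Module.finrank ℝ (Submodule.span ℝ {fun x => M x y0}) :=
          Submodule.finrank_mono hrange
      _ ≤ 1 := by
          by_cases hu : (fun x => M x y0) = (0 : α → ℝ)
          · rw [hu]
            rw [Submodule.span_zero_singleton]
            rw [finrank_bot]
            exact zero_le_one
          · rw [finrank_span_singleton hu]

lemma minor_of_rank_le_one {α β : Type*} [Fintype α] [Fintype β] (M : Matrix α β ℝ)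
    (h : M.rank ≤ 1) : ∀ x x' y y', M x y * M x' y' = M x y' * M x' y := by
  classical
  intro x x' y y'
  have hcol : ∀ z : β, (fun a => M a z) ∈ LinearMap.range M.mulVecLin := by
    intro z
    exact ⟨Pi.single z 1, by funext a; simp [Matrix.mulVecLin_apply, Matrix.mulVec_single]⟩
  have hfr : Module.finrank ℝ (LinearMap.range M.mulVecLin) ≤ 1 := h
  obtain ⟨v, hv⟩ := finrank_le_one_iff.mp hfr
  obtain ⟨c, hc⟩ := hv ⟨_, hcol y⟩
  obtain ⟨c', hc'⟩ := hv ⟨_, hcol y'⟩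
  have e1 : ∀ a, M a y = c * (v : α → ℝ) a := by
    intro a
    have := congrFun (congrArg (Subtype.val) hc) a
    simpa using this.symm
  have e1' : ∀ a, M a y' = c' * (v : α → ℝ) a := by
    intro a
    have := congrFun (congrArg (Subtype.val) hc') a
    simpa using this.symm
  rw [e1, e1', e1, e1']
  ring

lemma nnegRank_le_card {α β : Type*} [Fintype α] [Fintype β] {r : ℕ}
    (N : Fin r → Matrix α β ℝ) (h0 : ∀ ℓ i j, 0 ≤ N ℓ i j) (h1 : ∀ ℓ, (N ℓ).rank ≤ 1)
    (t : Finset (Fin r)) (ht : ∀ ℓ, ℓ ∉ t → N ℓ = 0) :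
    nnegRank (∑ ℓ, N ℓ) ≤ t.card := by
  classical
  apply Nat.sInf_le
  refine ⟨fun k => N (t.equivFin.symm k), fun ℓ i j => h0 _ i j, fun ℓ => h1 _, ?_⟩
  have h2 : ∑ ℓ ∈ t, N ℓ = ∑ ℓ, N ℓ :=
    Finset.sum_subset t.subset_univ (fun ℓ _ hℓ => ht ℓ hℓ)
  rw [← h2, ← Finset.sum_coe_sort t N, ← Equiv.sum_comp t.equivFin.symm (fun x : t => N x)]

lemma nnegRank_spec {α β : Type*} [Fintype α] [Fintype β] (M : Matrix α β ℝ)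
    (h0 : ∀ i j, 0 ≤ M i j) :
    ∃ R : Fin (nnegRank M) → Matrix α β ℝ,
      (∀ ℓ i j, 0 ≤ R ℓ i j) ∧ (∀ ℓ, (R ℓ).rank ≤ 1) ∧ M = ∑ ℓ, R ℓ := by
  classical
  have hne : { r : ℕ | ∃ R : Fin r → Matrix α β ℝ,
      (∀ ℓ i j, 0 ≤ R ℓ i j) ∧ (∀ ℓ, (R ℓ).rank ≤ 1) ∧ M = ∑ ℓ, R ℓ }.Nonempty := by
    refine ⟨Fintype.card (α × β), ?_⟩
    set e : Fin (Fintype.card (α × β)) ≃ α × β := (Fintype.equivFin (α × β)).symm with he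
    refine ⟨fun k => fun x y => if x = (e k).1 ∧ y = (e k).2 then M x y else 0,
      ?_, ?_, ?_⟩
    · intro ℓ i j
      dsimp only
      split_ifs with hc
      · exact h0 i j
      · exact le_refl 0
    · intro ℓ
      apply rank_le_one_of_minor
      intro x x' y y'
      dsimp only
      split_ifs <;> simp_all
    · ext x y
      change M x y = ((∑ ℓ, (fun k (x : α) (y : β) => if x = (e k).1 ∧ y = (e k).2 then M x y else 0) ℓ : α → β → ℝ)) x y
      rw [Finset.sum_apply, Finset.sum_apply]
      have h4 : (∑ k, (fun x y => if x = (e k).1 ∧ y = (e k).2 then M x y else 0) x y)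
          = ∑ p : α × β, if x = p.1 ∧ y = p.2 then M x y else 0 :=
        Equiv.sum_comp e (fun p : α × β => if x = p.1 ∧ y = p.2 then M x y else 0)
      rw [h4]
      symm
      have h3 : ∀ p : α × β, (x = p.1 ∧ y = p.2) ↔ ((x, y) = p) := by
        intro p; constructor
        · rintro ⟨rfl, rfl⟩; rfl
        · rintro rfl; exact ⟨rfl, rfl⟩
      calc (∑ p : α × β, if x = p.1 ∧ y = p.2 then M x y else 0)
          = ∑ p : α × β, if (x, y) = p then M x y else 0 :=
            Finset.sum_congr rfl (fun p _ => by rw [if_congr (h3 p) rfl rfl])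
        _ = M x y := by rw [Finset.sum_ite_eq]; simp
  unfold nnegRank
  exact Nat.sInf_mem hne

/-- Row index in the top (`S`) block. -/
def topF (m p : ℕ) (i : Fin m) : Fin (m + p + 1) := ⟨i.1, by have := i.2; omega⟩

/-- Row index in the middle (`T'`) block. -/
def midF (m p : ℕ) (i' : Fin p) : Fin (m + p + 1) := ⟨m + i'.1, by have := i'.2; omega⟩

/-- The last row index. -/
def lastF (m p : ℕ) : Fin (m + p + 1) := ⟨m + p, by omega⟩

/-- Column (second component) index for `s < q`. -/
def csF (q : ℕ) (s : Fin q) : Fin (q + 1) := ⟨s.1, by have := s.2; omega⟩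

/-- The last column (second component) index. -/
def qF (q : ℕ) : Fin (q + 1) := ⟨q, by omega⟩

section BuildAEval

variable {m n p q : ℕ} (S : Matrix (Fin m) (Fin n) ℝ) (T' : Matrix (Fin p) (Fin q) ℝ)

lemma buildA_top_eq (x : Fin (m + p + 1)) (j : Fin n) (s : Fin (q + 1)) (i : Fin m)
    (hx : (x : ℕ) = (i : ℕ)) : buildA S T' x (j, s) = S i j := by
  have h1 : (x : ℕ) < m := by rw [hx]; exact i.2
  simp only [buildA]
  rw [dif_pos h1]
  congr 1
  exact Fin.ext hx

lemma buildA_mid_eq (x : Fin (m + p + 1)) (j : Fin n) (s : Fin (q + 1)) (i' : Fin p)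
    (s' : Fin q) (hx : (x : ℕ) = m + (i' : ℕ)) (hs : (s : ℕ) = (s' : ℕ)) :
    buildA S T' x (j, s) = T' i' s' := by
  have h1 : ¬ (x : ℕ) < m := by omega
  have h2 : (x : ℕ) < m + p := by have := i'.2; omega
  have h3 : (s : ℕ) < q := by have := s'.2; omega
  simp only [buildA]
  rw [dif_neg h1, dif_pos h2, dif_pos h3]
  congr 1
  · exact Fin.ext (by simp [hx])
  · exact Fin.ext hs

lemma buildA_midq_eq (x : Fin (m + p + 1)) (j : Fin n) (s : Fin (q + 1)) (i' : Fin p)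
    (hx : (x : ℕ) = m + (i' : ℕ)) (hs : (s : ℕ) = q) :
    buildA S T' x (j, s) = 0 := by
  have h1 : ¬ (x : ℕ) < m := by omega
  have h2 : (x : ℕ) < m + p := by have := i'.2; omega
  have h3 : ¬ (s : ℕ) < q := by omega
  simp only [buildA]
  rw [dif_neg h1, dif_pos h2, dif_neg h3]

lemma buildA_lastlt_eq (x : Fin (m + p + 1)) (j : Fin n) (s : Fin (q + 1))
    (hx : (x : ℕ) = m + p) (s' : Fin q) (hs : (s : ℕ) = (s' : ℕ)) :
    buildA S T' x (j, s) = 0 := by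
  have h1 : ¬ (x : ℕ) < m := by omega
  have h2 : ¬ (x : ℕ) < m + p := by omega
  have h3 : (s : ℕ) < q := by have := s'.2; omega
  simp only [buildA]
  rw [dif_neg h1, dif_neg h2, if_pos h3]

lemma buildA_lastq_eq (x : Fin (m + p + 1)) (j : Fin n) (s : Fin (q + 1))
    (hx : (x : ℕ) = m + p) (hs : (s : ℕ) = q) :
    buildA S T' x (j, s) = 1 := by
  have h1 : ¬ (x : ℕ) < m := by omega
  have h2 : ¬ (x : ℕ) < m + p := by omega
  have h3 : ¬ (s : ℕ) < q := by omega
  simp only [buildA]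
  rw [dif_neg h1, dif_neg h2, if_neg h3]

end BuildAEval

end Aux

/-- With `S`, `T'`, `A` as in the setup, if every row of `S` contains a zero entry and
`q ≥ 1` (and `n ≥ 1`, as is implicit in the setup coming from a nonempty polytope),
then `r₊(A) ≥ r₊(S) + r₊(T') + 1`. -/
theorem nnegRank_buildA_ge {m n p q : ℕ}
    (S : Matrix (Fin m) (Fin n) ℝ) (T' : Matrix (Fin p) (Fin q) ℝ)
    (hS : ∀ i j, 0 ≤ S i j) (hT' : ∀ i j, 0 ≤ T' i j)
    (hrow : ∀ i, ∃ j, S i j = 0) (hq : 1 ≤ q) (hn : 1 ≤ n) :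
    nnegRank S + nnegRank T' + 1 ≤ nnegRank (buildA S T') := by
  classical
  have hA0 : ∀ i j, 0 ≤ buildA S T' i j := by
    intro x y
    simp only [buildA]
    split_ifs <;> first | exact hS _ _ | exact hT' _ _ | norm_num
  obtain ⟨R, hR0, hRr, hsum⟩ := nnegRank_spec (buildA S T') hA0
  have hAe : ∀ x y, (∑ ℓ, R ℓ x y) = buildA S T' x y := by
    intro x y
    conv_rhs => rw [hsum]
    rw [Matrix.sum_apply]
  have hZ : ∀ x y, buildA S T' x y = 0 → ∀ ℓ, R ℓ x y = 0 := by
    intro x y h ℓ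
    have hs0 : (∑ ℓ, R ℓ x y) = 0 := by rw [hAe x y, h]
    exact (Finset.sum_eq_zero_iff_of_nonneg (fun ℓ _ => hR0 ℓ x y)).mp hs0 ℓ (Finset.mem_univ ℓ)
  have hminor : ∀ ℓ x x' y y', R ℓ x y * R ℓ x' y' = R ℓ x y' * R ℓ x' y :=
    fun ℓ => minor_of_rank_le_one (R ℓ) (hRr ℓ)
  -- entry sums
  have hTopS : ∀ (i : Fin m) (j : Fin n) (s : Fin (q + 1)),
      (∑ ℓ, R ℓ (topF m p i) (j, s)) = S i j := by
    intro i j s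
    rw [hAe]
    exact buildA_top_eq S T' _ j s i rfl
  have hMidT : ∀ (i' : Fin p) (j : Fin n) (s : Fin q),
      (∑ ℓ, R ℓ (midF m p i') (j, csF q s)) = T' i' s := by
    intro i' j s
    rw [hAe]
    exact buildA_mid_eq S T' _ j _ i' s rfl rfl
  have hMidQ0 : ∀ ℓ (i' : Fin p) (j : Fin n), R ℓ (midF m p i') (j, qF q) = 0 :=
    fun ℓ i' j => hZ _ _ (buildA_midq_eq S T' _ j _ i' rfl rfl) ℓ
  have hLast0 : ∀ ℓ (j : Fin n) (s : Fin q), R ℓ (lastF m p) (j, csF q s) = 0 :=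
    fun ℓ j s => hZ _ _ (buildA_lastlt_eq S T' _ j _ rfl s rfl) ℓ
  have hLast1 : ∀ j : Fin n, (∑ ℓ, R ℓ (lastF m p) (j, qF q)) = 1 := by
    intro j
    rw [hAe]
    exact buildA_lastq_eq S T' _ j _ rfl rfl
  have hRowZ : ∀ i : Fin m, ∃ jz : Fin n, ∀ ℓ (s : Fin (q + 1)),
      R ℓ (topF m p i) (jz, s) = 0 := by
    intro i
    obtain ⟨jz, hjz⟩ := hrow i
    refine ⟨jz, fun ℓ s => hZ _ _ ?_ ℓ⟩
    rw [buildA_top_eq S T' _ jz s i rfl]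
    exact hjz
  -- the set of factors touching the middle block
  set B : Finset (Fin (nnegRank (buildA S T'))) := Finset.univ.filter
    (fun ℓ => ∃ (i' : Fin p) (j : Fin n) (s : Fin q),
      R ℓ (midF m p i') (j, csF q s) ≠ 0) with hB
  have hnB : ∀ ℓ, ℓ ∉ B → ∀ (i' : Fin p) (j : Fin n) (s : Fin q),
      R ℓ (midF m p i') (j, csF q s) = 0 := by
    intro ℓ h
    rw [hB] at h
    simp only [Finset.mem_filter, Finset.mem_univ, true_and, not_exists, ne_eq,
      not_not] at h
    exact h
  have hBq0 : ∀ ℓ ∈ B, ∀ (x : Fin (m + p + 1)) (j : Fin n), R ℓ x (j, qF q) = 0 := by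
    intro ℓ hℓ x j
    rw [hB, Finset.mem_filter] at hℓ
    obtain ⟨-, i', j1, s1, hw⟩ := hℓ
    have h1 : R ℓ (midF m p i') (j, qF q) = 0 := hMidQ0 ℓ i' j
    have h2 := hminor ℓ x (midF m p i') (j, qF q) (j1, csF q s1)
    rw [h1] at h2
    have h3 : R ℓ x (j, qF q) * R ℓ (midF m p i') (j1, csF q s1) = 0 := by
      rw [h2]; ring
    rcases mul_eq_zero.mp h3 with h | h
    · exact h
    · exact absurd h hw
  by_cases hkill : ∃ ℓ ∈ B, ∀ s : Fin q, ∃ j : Fin n, ∀ i' : Fin p,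
      R ℓ (midF m p i') (j, csF q s) = 0
  · -- a killable factor exists in B
    obtain ⟨ℓs, hℓsB, hk⟩ := hkill
    choose jf hjf using hk
    -- T' decomposition avoiding ℓs
    have hsumT : (∑ ℓ, Matrix.of (fun (i' : Fin p) (s : Fin q) =>
        R ℓ (midF m p i') (jf s, csF q s))) = T' := by
      ext i' s
      rw [Matrix.sum_apply]
      exact hMidT i' (jf s) s
    have hTle : nnegRank T' ≤ (B.erase ℓs).card := by
      have hle := nnegRank_le_card
        (fun ℓ => Matrix.of (fun (i' : Fin p) (s : Fin q) =>
          R ℓ (midF m p i') (jf s, csF q s)))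
        (fun ℓ i' s => hR0 ℓ _ _)
        (fun ℓ => rank_le_one_of_minor _
          (fun x x' y y' => hminor ℓ (midF m p x) (midF m p x') _ _))
        (B.erase ℓs) ?_
      · rwa [hsumT] at hle
      · intro ℓ hℓ
        by_cases hb : ℓ ∈ B
        · have heq : ℓ = ℓs := by
            by_contra hne
            exact hℓ (Finset.mem_erase.mpr ⟨hne, hb⟩)
          subst heq
          ext i' s
          simp only [Matrix.of_apply, Matrix.zero_apply]
          exact hjf s i'
        · ext i' s
          simp only [Matrix.of_apply, Matrix.zero_apply]
          exact hnB ℓ hb i' (jf s) s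
    -- S decomposition avoiding B
    have hsumS : (∑ ℓ, Matrix.of (fun (i : Fin m) (j : Fin n) =>
        R ℓ (topF m p i) (j, qF q))) = S := by
      ext i j
      rw [Matrix.sum_apply]
      exact hTopS i j (qF q)
    have hSle : nnegRank S ≤ (Bᶜ).card := by
      have hle := nnegRank_le_card
        (fun ℓ => Matrix.of (fun (i : Fin m) (j : Fin n) => R ℓ (topF m p i) (j, qF q)))
        (fun ℓ i j => hR0 ℓ _ _)
        (fun ℓ => rank_le_one_of_minor _
          (fun x x' y y' => hminor ℓ (topF m p x) (topF m p x') _ _))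
        (Bᶜ) ?_
      · rwa [hsumS] at hle
      · intro ℓ hℓ
        have hb : ℓ ∈ B := by
          by_contra hb
          exact hℓ (Finset.mem_compl.mpr hb)
        ext i j
        simp only [Matrix.of_apply, Matrix.zero_apply]
        exact hBq0 ℓ hb (topF m p i) j
    have e1 : (Bᶜ).card = nnegRank (buildA S T') - B.card := by
      rw [Finset.card_compl, Fintype.card_fin]
    have e2 : (B.erase ℓs).card = B.card - 1 := Finset.card_erase_of_mem hℓsB
    have e3 : 1 ≤ B.card := Finset.card_pos.mpr ⟨ℓs, hℓsB⟩
    have e4 : B.card ≤ nnegRank (buildA S T') := by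
      have := Finset.card_le_univ B
      rwa [Fintype.card_fin] at this
    omega
  · -- no killable factor: every factor in B has zero top block
    push_neg at hkill
    have hBtop0 : ∀ ℓ ∈ B, ∀ (i : Fin m) (y : Fin n × Fin (q + 1)),
        R ℓ (topF m p i) y = 0 := by
      intro ℓ hℓ i y
      obtain ⟨sl, hsl⟩ := hkill ℓ hℓ
      obtain ⟨jz, hjz⟩ := hRowZ i
      obtain ⟨iw, hiw⟩ := hsl jz
      have h2 := hminor ℓ (topF m p i) (midF m p iw) y (jz, csF q sl)
      rw [hjz ℓ (csF q sl)] at h2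
      have h3 : R ℓ (topF m p i) y * R ℓ (midF m p iw) (jz, csF q sl) = 0 := by
        rw [h2]; ring
      rcases mul_eq_zero.mp h3 with h | h
      · exact h
      · exact absurd h hiw
    set C : Finset (Fin (nnegRank (buildA S T'))) := Finset.univ.filter
      (fun ℓ => ℓ ∉ B ∧ ∃ j1 : Fin n, R ℓ (lastF m p) (j1, qF q) ≠ 0) with hC
    have hC0 : ∀ ℓ ∈ C, ∀ (x : Fin (m + p + 1)) (j : Fin n) (s : Fin q),
        R ℓ x (j, csF q s) = 0 := by
      intro ℓ hℓ x j s
      rw [hC, Finset.mem_filter] at hℓ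
      obtain ⟨-, -, j1, hw⟩ := hℓ
      have h1 : R ℓ (lastF m p) (j, csF q s) = 0 := hLast0 ℓ j s
      have h2 := hminor ℓ x (lastF m p) (j, csF q s) (j1, qF q)
      rw [h1] at h2
      have h3 : R ℓ x (j, csF q s) * R ℓ (lastF m p) (j1, qF q) = 0 := by
        rw [h2]; ring
      rcases mul_eq_zero.mp h3 with h | h
      · exact h
      · exact absurd h hw
    have hCne : ∃ ℓc, ℓc ∈ C := by
      have h1 := hLast1 ⟨0, hn⟩
      have h2 : ∃ ℓ, R ℓ (lastF m p) ((⟨0, hn⟩ : Fin n), qF q) ≠ 0 := by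
        by_contra hc
        push_neg at hc
        rw [Finset.sum_eq_zero (fun ℓ _ => hc ℓ)] at h1
        norm_num at h1
      obtain ⟨ℓc, hℓc⟩ := h2
      have hnotB : ℓc ∉ B := fun hB' => hℓc (hBq0 ℓc hB' (lastF m p) ⟨0, hn⟩)
      refine ⟨ℓc, ?_⟩
      rw [hC, Finset.mem_filter]
      exact ⟨Finset.mem_univ _, hnotB, ⟨0, hn⟩, hℓc⟩
    obtain ⟨ℓc, hℓcC⟩ := hCne
    -- S decomposition avoiding B ∪ C, using column (·, 0)
    have hsumS : (∑ ℓ, Matrix.of (fun (i : Fin m) (j : Fin n) =>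
        R ℓ (topF m p i) (j, csF q ⟨0, hq⟩))) = S := by
      ext i j
      rw [Matrix.sum_apply]
      exact hTopS i j (csF q ⟨0, hq⟩)
    have hSle : nnegRank S ≤ (((B ∪ C)ᶜ)).card := by
      have hle := nnegRank_le_card
        (fun ℓ => Matrix.of (fun (i : Fin m) (j : Fin n) =>
          R ℓ (topF m p i) (j, csF q ⟨0, hq⟩)))
        (fun ℓ i j => hR0 ℓ _ _)
        (fun ℓ => rank_le_one_of_minor _
          (fun x x' y y' => hminor ℓ (topF m p x) (topF m p x') _ _))
        ((B ∪ C)ᶜ) ?_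
      · rwa [hsumS] at hle
      · intro ℓ hℓ
        have hb : ℓ ∈ B ∪ C := by
          by_contra hb
          exact hℓ (Finset.mem_compl.mpr hb)
        ext i j
        simp only [Matrix.of_apply, Matrix.zero_apply]
        rcases Finset.mem_union.mp hb with h | h
        · exact hBtop0 ℓ h i _
        · exact hC0 ℓ h (topF m p i) j ⟨0, hq⟩
    -- T' decomposition supported on B
    have hsumT : (∑ ℓ, Matrix.of (fun (i' : Fin p) (s : Fin q) =>
        R ℓ (midF m p i') ((⟨0, hn⟩ : Fin n), csF q s))) = T' := by
      ext i' s
      rw [Matrix.sum_apply]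
      exact hMidT i' ⟨0, hn⟩ s
    have hTle : nnegRank T' ≤ B.card := by
      have hle := nnegRank_le_card
        (fun ℓ => Matrix.of (fun (i' : Fin p) (s : Fin q) =>
          R ℓ (midF m p i') ((⟨0, hn⟩ : Fin n), csF q s)))
        (fun ℓ i' s => hR0 ℓ _ _)
        (fun ℓ => rank_le_one_of_minor _
          (fun x x' y y' => hminor ℓ (midF m p x) (midF m p x') _ _))
        B ?_
      · rwa [hsumT] at hle
      · intro ℓ hℓ
        ext i' s
        simp only [Matrix.of_apply, Matrix.zero_apply]
        exact hnB ℓ hℓ i' ⟨0, hn⟩ s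
    have hd : Disjoint B C := by
      rw [Finset.disjoint_left]
      intro a haB haC
      rw [hC, Finset.mem_filter] at haC
      exact haC.2.1 haB
    have e1 : ((B ∪ C)ᶜ).card = nnegRank (buildA S T') - (B ∪ C).card := by
      rw [Finset.card_compl, Fintype.card_fin]
    have e2 : (B ∪ C).card = B.card + C.card := Finset.card_union_of_disjoint hd
    have e3 : 1 ≤ C.card := Finset.card_pos.mpr ⟨ℓc, hℓcC⟩
    have e4 : (B ∪ C).card ≤ nnegRank (buildA S T') := by
      have := Finset.card_le_univ (B ∪ C)
      rwa [Fintype.card_fin] at this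
    omega
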